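/- Let G = (V, E) be a strongly connected digraph containing at least one cycle, let v be a vertex of G, and let k be an integer with 1 ≤ k ≤ |V|. Then k divides the period of G if and only if there is no path in the undirected graph G'_k between (v, 0) and (v, i) for any i ≠ 0. -/

import Mathlib

variable {V : Type*}

/-- There is a path (walk) of length `n` from `u` to `v` in the digraph with
edge relation `E`: a sequence `u = f 0, f 1, …, f n = v` of vertices with
`(f i, f (i+1))` an edge for all `i < n`. Vertices and edges may repeat. -/
def IsPathOfLength (E : V → V → Prop) (u v : V) (n : ℕ) : Prop :=
  ∃ f : ℕ → V, f 0 = u ∧ f n = v ∧ ∀ i < n, E (f i) (f (i + 1))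

/-- There is a `(u,v)`-path (of some length). -/
def HasPath (E : V → V → Prop) (u v : V) : Prop :=
  ∃ n, IsPathOfLength E u v n

/-- A digraph is strongly connected if there is a path between every pair of vertices. -/
def StronglyConnected (E : V → V → Prop) : Prop :=
  ∀ u v, HasPath E u v

/-- The set of lengths of cycles (paths of positive length from a vertex to itself). -/
def cycleLengths (E : V → V → Prop) : Set ℕ :=
  {n | 0 < n ∧ ∃ v, IsPathOfLength E v v n}

/-- A digraph is acyclic if it has no cycle. -/
def Acyclic (E : V → V → Prop) : Prop :=
  ∀ (v : V) (n : ℕ), 0 < n → ¬ IsPathOfLength E v v n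

/-- `p` is the greatest common divisor of the set `S` of natural numbers:
`p` divides every element of `S`, and every common divisor of `S` divides `p`. -/
def IsSetGcd (S : Set ℕ) (p : ℕ) : Prop :=
  (∀ n ∈ S, p ∣ n) ∧ ∀ q : ℕ, (∀ n ∈ S, q ∣ n) → q ∣ p

/-- `u` and `v` are in the same strongly connected component. -/
def SameSCC (E : V → V → Prop) (u v : V) : Prop :=
  HasPath E u v ∧ HasPath E v u

/-- The set of lengths of cycles contained in the strongly connected component of `c`. -/
def compCycleLengths (E : V → V → Prop) (c : V) : Set ℕ :=
  {n | 0 < n ∧ ∃ v, SameSCC E v c ∧ IsPathOfLength E v v n}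

/-- `P` is the period of the digraph `E`: the least common multiple of the periods
(gcds of cycle lengths) of the strongly connected components containing at least one
cycle. Characterised by divisibility: every such component period divides `P`, and `P`
divides every common multiple of the component periods. -/
def IsDigraphPeriod (E : V → V → Prop) (P : ℕ) : Prop :=
  (∀ (c : V) (p : ℕ), (compCycleLengths E c).Nonempty →
      IsSetGcd (compCycleLengths E c) p → p ∣ P) ∧
  ∀ Q : ℕ, (∀ (c : V) (p : ℕ), (compCycleLengths E c).Nonempty →
      IsSetGcd (compCycleLengths E c) p → p ∣ Q) → P ∣ Q

/-- There is a path of length `n` from `u` to `v` passing through the vertex `c`. -/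
def IsPathThruOfLength (E : V → V → Prop) (u v c : V) (n : ℕ) : Prop :=
  ∃ f : ℕ → V, f 0 = u ∧ f n = v ∧ (∀ i < n, E (f i) (f (i + 1))) ∧ ∃ m ≤ n, f m = c

/-- Adjacency in the undirected graph `G'_k`: vertices `(u, i)` and `(v, j)` of
`V × ZMod k` are adjacent iff `(u,v) ∈ E` and `j = i + 1 (mod k)` (in either direction). -/
def GkAdj (E : V → V → Prop) (k : ℕ) (a b : V × ZMod k) : Prop :=
  (E a.1 b.1 ∧ b.2 = a.2 + 1) ∨ (E b.1 a.1 ∧ a.2 = b.2 + 1)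

/-- Two vertices of `G'_k` are joined by an (undirected) path. -/
def GkConn (E : V → V → Prop) (k : ℕ) : V × ZMod k → V × ZMod k → Prop :=
  Relation.ReflTransGen (GkAdj E k)


private lemma path_concat' {E : V → V → Prop} {u w x : V} {a b : ℕ}
    (h1 : IsPathOfLength E u w a) (h2 : IsPathOfLength E w x b) :
    IsPathOfLength E u x (a + b) := by
  obtain ⟨f, hf0, hfa, hf⟩ := h1
  obtain ⟨g, hg0, hgb, hg⟩ := h2
  refine ⟨fun i => if i ≤ a then f i else g (i - a), by simp [hf0], ?_, ?_⟩
  · by_cases hb : b = 0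
    · subst hb
      simpa using hfa.trans (hg0.symm.trans hgb)
    · have h' : ¬ (a + b ≤ a) := by omega
      have h'' : a + b - a = b := by omega
      simp [h', h'', hgb]
  · intro i hi
    by_cases h1 : i + 1 ≤ a
    · have h2' : i ≤ a := by omega
      simp only [if_pos h2', if_pos h1]
      exact hf i (by omega)
    · by_cases h2' : i ≤ a
      · have hia : i = a := by omega
        have hb : 0 < b := by omega
        simp only [if_pos h2', if_neg h1]
        subst hia
        have h3 : i + 1 - i = 1 := by omega
        rw [hfa, h3, ← hg0]
        exact hg 0 hb
      · simp only [if_neg h1, if_neg h2']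
        have h3 : i + 1 - a = (i - a) + 1 := by omega
        rw [h3]
        exact hg (i - a) (by omega)

private lemma path_single' {E : V → V → Prop} {u w : V} (h : E u w) :
    IsPathOfLength E u w 1 :=
  ⟨fun i => if i = 0 then u else w, by simp, by simp, by
    intro i hi
    have : i = 0 := by omega
    subst this
    simpa using h⟩

private lemma gkadj_symm' {E : V → V → Prop} {k : ℕ} {a b : V × ZMod k}
    (h : GkAdj E k a b) : GkAdj E k b a := Or.symm h

private lemma gkconn_shift' {E : V → V → Prop} {k : ℕ} {a b : V × ZMod k}
    (h : GkConn E k a b) (c : ZMod k) :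
    GkConn E k (a.1, a.2 + c) (b.1, b.2 + c) := by
  induction h with
  | refl => exact Relation.ReflTransGen.refl
  | tail h hadj ih =>
    refine ih.tail ?_
    rcases hadj with ⟨he, hj⟩ | ⟨he, hj⟩
    · exact Or.inl ⟨he, by simp only []; rw [hj]; ring⟩
    · exact Or.inr ⟨he, by simp only []; rw [hj]; ring⟩

private lemma gkconn_of_path' {E : V → V → Prop} {k : ℕ} {u w : V} {n : ℕ}
    (h : IsPathOfLength E u w n) (i : ZMod k) :
    GkConn E k (u, i) (w, i + n) := by
  induction n generalizing w with
  | zero =>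
    obtain ⟨f, hf0, hfn, _⟩ := h
    have huw : u = w := by rw [← hf0, hfn]
    subst huw
    have h0 : i + ((0 : ℕ) : ZMod k) = i := by push_cast; ring
    rw [h0]
    exact Relation.ReflTransGen.refl
  | succ n ih =>
    obtain ⟨f, hf0, hfn, hf⟩ := h
    have h1 : GkConn E k (u, i) (f n, i + n) :=
      ih ⟨f, hf0, rfl, fun j hj => hf j (by omega)⟩
    refine h1.tail (Or.inl ⟨hfn ▸ hf n (by omega), ?_⟩)
    show i + ((n + 1 : ℕ) : ZMod k) = i + (n : ℕ) + 1
    push_cast; ring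


/-- For a strongly connected digraph `G` containing at least one cycle,
a vertex `v`, and `1 ≤ k ≤ |V|`, `k` divides the period of `G` iff there is no path in
the undirected graph `G'_k` between `(v, 0)` and `(v, i)` for any `i ≠ 0`. -/
theorem period_dvd_iff_no_Gk_path [Fintype V] (E : V → V → Prop)
    (hsc : StronglyConnected E) (hcyc : (cycleLengths E).Nonempty)
    (p : ℕ) (hp : IsSetGcd (cycleLengths E) p)
    (v : V) (k : ℕ) (hk1 : 1 ≤ k) (hk2 : k ≤ Fintype.card V) :
    k ∣ p ↔ ∀ i : ZMod k, i ≠ 0 → ¬ GkConn E k (v, 0) (v, i) := by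
  haveI : NeZero k := ⟨by omega⟩
  constructor
  · -- k ∣ p → no nontrivial connection
    intro hkp i hi hconn
    choose ℓ hℓ using fun u => hsc v u
    -- any closed walk at v has length divisible by k
    have hclosed : ∀ s : ℕ, IsPathOfLength E v v s → k ∣ s := by
      intro s hs
      rcases Nat.eq_zero_or_pos s with h | h
      · simp [h]
      · exact hkp.trans (hp.1 s ⟨h, v, hs⟩)
    -- path lengths from v to u are determined mod k
    have key : ∀ (u : V) (n : ℕ), IsPathOfLength E v u n →
        (n : ZMod k) = (ℓ u : ZMod k) := by
      intro u n hn
      obtain ⟨m, hm⟩ := hsc u v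
      have d1 : k ∣ n + m := hclosed _ (path_concat' hn hm)
      have d2 : k ∣ ℓ u + m := hclosed _ (path_concat' (hℓ u) hm)
      have e1 : ((n + m : ℕ) : ZMod k) = 0 := (ZMod.natCast_eq_zero_iff _ _).2 d1
      have e2 : ((ℓ u + m : ℕ) : ZMod k) = 0 := (ZMod.natCast_eq_zero_iff _ _).2 d2
      push_cast at e1 e2
      have := e1.trans e2.symm
      exact add_right_cancel this
    have inv : ∀ a b : V × ZMod k, GkConn E k a b →
        a.2 - (ℓ a.1 : ZMod k) = b.2 - (ℓ b.1 : ZMod k) := by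
      intro a b h
      induction h with
      | refl => rfl
      | tail h hadj ih =>
        refine ih.trans ?_
        rcases hadj with ⟨he, hj⟩ | ⟨he, hj⟩
        · have : ((ℓ _ + 1 : ℕ) : ZMod k) = _ :=
            key _ (ℓ _ + 1) (path_concat' (hℓ _) (path_single' he))
          push_cast at this
          rw [hj, ← this]
          ring
        · have : ((ℓ _ + 1 : ℕ) : ZMod k) = _ :=
            key _ (ℓ _ + 1) (path_concat' (hℓ _) (path_single' he))
          push_cast at this
          rw [hj, ← this]
          ring
    have h0 : (0 : ZMod k) - (ℓ v : ZMod k) = i - (ℓ v : ZMod k) := inv _ _ hconn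
    exact hi (by linear_combination -h0)
  · -- no nontrivial connection → k ∣ p
    intro hno
    by_contra hkp
    set d := Nat.gcd p k with hd
    -- the set of reachable shifts is an additive subgroup
    have hsymm : ∀ a b : V × ZMod k, GkConn E k a b → GkConn E k b a := by
      intro a b h
      haveI : Std.Symm (GkAdj E k) := ⟨fun x y hxy => gkadj_symm' hxy⟩
      exact (Relation.ReflTransGen.symmetric (r := GkAdj E k)).symm _ _ h
    let H : AddSubgroup (ZMod k) :=
      { carrier := {i : ZMod k | GkConn E k (v, 0) (v, i)}
        zero_mem' := Relation.ReflTransGen.refl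
        add_mem' := by
          intro i j hi hj
          have h1 : GkConn E k (v, (0 : ZMod k) + j) (v, i + j) := gkconn_shift' hi j
          rw [zero_add] at h1
          exact Relation.ReflTransGen.trans hj h1
        neg_mem' := by
          intro i hi
          have h1 := gkconn_shift' (hsymm _ _ hi) (-i)
          simp only [add_neg_cancel, zero_add] at h1
          exact h1 }
    have hmemH : ∀ i : ZMod k, i ∈ H ↔ GkConn E k (v, 0) (v, i) := fun _ => Iff.rfl
    -- closed walks at v give elements of H
    have hS : ∀ n : ℕ, IsPathOfLength E v v n → ((n : ZMod k) ∈ H) := by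
      intro n hn
      have := gkconn_of_path' (k := k) hn 0
      rw [zero_add] at this
      exact this
    -- every cycle length maps into H
    have hCyc : ∀ n ∈ cycleLengths E, ((n : ZMod k) ∈ H) := by
      rintro n ⟨hn, w, hw⟩
      obtain ⟨t1, ht1⟩ := hsc v w
      obtain ⟨t2, ht2⟩ := hsc w v
      have m1 : ((t1 + t2 : ℕ) : ZMod k) ∈ H := hS _ (path_concat' ht1 ht2)
      have m2 : ((t1 + n + t2 : ℕ) : ZMod k) ∈ H :=
        hS _ (path_concat' (path_concat' ht1 hw) ht2)
      have := H.sub_mem m2 m1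
      have he : ((t1 + n + t2 : ℕ) : ZMod k) - ((t1 + t2 : ℕ) : ZMod k) = (n : ZMod k) := by
        push_cast; ring
      rwa [he] at this
    have hK : ((k : ℕ) : ZMod k) ∈ H := by
      rw [ZMod.natCast_self]; exact H.zero_mem
    -- pull back to ℤ and use cyclicity
    let J : AddSubgroup ℤ := H.comap (Int.castAddHom (ZMod k))
    obtain ⟨g, hg⟩ := Int.subgroup_cyclic J
    have hmemJ : ∀ z : ℤ, z ∈ J ↔ g ∣ z := by
      intro z
      rw [hg, AddSubgroup.mem_closure_singleton]
      simp only [zsmul_eq_mul]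
      constructor
      · rintro ⟨n, rfl⟩; exact dvd_mul_left g n
      · rintro ⟨c, rfl⟩; exact ⟨c, mul_comm c g⟩
    have hgq : ∀ n : ℕ, ((n : ZMod k) ∈ H) → g.natAbs ∣ n := by
      intro n hn
      have : ((n : ℤ) : ZMod k) ∈ H := by push_cast; exact hn
      have : g ∣ (n : ℤ) := (hmemJ _).1 this
      exact Int.natAbs_dvd_natAbs.2 (by simpa using this)
    have hqp : g.natAbs ∣ p := hp.2 _ (fun n hn => hgq n (hCyc n hn))
    have hqk : g.natAbs ∣ k := hgq k hK
    have hqd : g.natAbs ∣ d := Nat.dvd_gcd hqp hqk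
    have hdJ : ((d : ℤ) : ZMod k) ∈ H := by
      have : (d : ℤ) ∈ J := (hmemJ _).2 (Int.natAbs_dvd.1 (Int.natCast_dvd_natCast.2 hqd))
      exact this
    have hdH : ((d : ZMod k) ∈ H) := by
      have : ((d : ℤ) : ZMod k) = (d : ZMod k) := by push_cast; ring
      rwa [this] at hdJ
    have hdne : (d : ZMod k) ≠ 0 := by
      intro h0
      have hkd : k ∣ d := (ZMod.natCast_eq_zero_iff _ _).1 h0
      exact hkp (hkd.trans (Nat.gcd_dvd_left p k))
    exact hno (d : ZMod k) hdne hdH
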